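/- Let d ≥ 2 be an integer, let ψ ∈ ℂ^d be a unit vector, let A, B ∈ M_d be positive semidefinite matrices, and let p ∈ ℝ. If (Tr(A)·1_d + Aᵀ)/2 + (Tr(B)·1_d − Bᵀ)/2 = p·|ψ⟩⟨ψ|, then A = 0 and p ≥ 0; if moreover d > 2, then also B = 0 and p = 0. -/

import Mathlib

open Matrix Kronecker BigOperators ComplexOrder

noncomputable section

/-- Entrywise complex conjugate `U̅` of a matrix. -/
def mconj {d : ℕ} (U : Matrix (Fin d) (Fin d) ℂ) : Matrix (Fin d) (Fin d) ℂ :=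
  U.map (starRingEnd ℂ)

/-- Rank-one outer product `|v⟩⟨v|`. -/
def outer {n : Type*} (v : n → ℂ) : Matrix n n ℂ :=
  Matrix.vecMulVec v (star v)

/-- Choi vector `|U⟩⟩ = Σ_i e_i ⊗ U e_i`. -/
def choiVec {d : ℕ} (U : Matrix (Fin d) (Fin d) ℂ) : Fin d × Fin d → ℂ :=
  fun p => U p.2 p.1

/-- `|U⟩⟩⟨⟨U|`. -/
def choiProj {d : ℕ} (U : Matrix (Fin d) (Fin d) ℂ) :
    Matrix (Fin d × Fin d) (Fin d × Fin d) ℂ :=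
  outer (choiVec U)

/-- Partial trace over the first tensor factor. -/
def ptrLeft {α β : Type*} [Fintype α] (S : Matrix (α × β) (α × β) ℂ) :
    Matrix β β ℂ :=
  fun b b' => ∑ a, S (a, b) (a, b')

/-- Partial trace over the second (last) tensor factor. -/
def ptrRight {α β : Type*} [Fintype β] (S : Matrix (α × β) (α × β) ℂ) :
    Matrix α α ℂ :=
  fun a a' => ∑ b, S (a, b) (a', b)


open ComplexOrder in
lemma psd_trace_nonneg {n : Type*} [Fintype n] [DecidableEq n] {C : Matrix n n ℂ}
    (hC : C.PosSemidef) : 0 ≤ C.trace :=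
  Finset.sum_nonneg fun i _ => by
    simpa [dotProduct, Pi.single_apply] using hC.dotProduct_mulVec_nonneg (Pi.single i 1)

open ComplexOrder in
lemma psd_trace_eq_zero {n : Type*} [Fintype n] [DecidableEq n] {C : Matrix n n ℂ}
    (hC : C.PosSemidef) (h : C.trace = 0) : C = 0 := by
  have hdiag : ∀ i, C i i = 0 := by
    intro i
    exact (Finset.sum_eq_zero_iff_of_nonneg (fun i _ => by
      simpa [dotProduct, Pi.single_apply] using hC.dotProduct_mulVec_nonneg (Pi.single i 1))).mp h i
      (Finset.mem_univ i)
  ext i j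
  have h0 : star (Pi.single j 1 : n → ℂ) ⬝ᵥ C *ᵥ (Pi.single j 1) = 0 := by
    simpa [dotProduct, Pi.single_apply] using hdiag j
  have := (hC.dotProduct_mulVec_zero_iff (Pi.single j 1)).mp h0
  have := congrFun this i
  simpa using this

open ComplexOrder MatrixOrder in
lemma psd_trace_mul_nonneg {n : Type*} [Fintype n] [DecidableEq n] {C D : Matrix n n ℂ}
    (hC : C.PosSemidef) (hD : D.PosSemidef) : 0 ≤ (C * D).trace := by
  have h1 : (CFC.sqrt C * D * (CFC.sqrt C)ᴴ).PosSemidef :=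
    hD.mul_mul_conjTranspose_same (CFC.sqrt C)
  rw [(CFC.sqrt_nonneg C).posSemidef.1.eq] at h1
  obtain ⟨S, hSS, hSP⟩ : ∃ S : Matrix n n ℂ, S * S = C ∧ (S * D * S).PosSemidef :=
    ⟨CFC.sqrt C, CFC.sqrt_mul_sqrt_self C hC.nonneg, h1⟩
  have : (C * D).trace = (S * D * S).trace := by
    rw [← hSS, mul_assoc, Matrix.trace_mul_comm, mul_assoc]
  rw [this]
  exact psd_trace_nonneg hSP

/-- **Key matrix identity for the conjugation/inversion SDPs.** If `A, B ≥ 0` and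
`(Tr(A)·1 + Aᵀ)/2 + (Tr(B)·1 − Bᵀ)/2 = p·|ψ⟩⟨ψ|` for a unit vector `ψ`, then
`A = 0` and `p ≥ 0`; if moreover `d > 2`, then also `B = 0` and `p = 0`. -/
theorem conjugation_sdp_identity
    (d : ℕ) (hd : 2 ≤ d) (ψ : Fin d → ℂ) (hψ : star ψ ⬝ᵥ ψ = 1)
    (A B : Matrix (Fin d) (Fin d) ℂ) (hA : A.PosSemidef) (hB : B.PosSemidef)
    (p : ℝ)
    (h : (2 : ℂ)⁻¹ • (A.trace • (1 : Matrix (Fin d) (Fin d) ℂ) + Aᵀ)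
        + (2 : ℂ)⁻¹ • (B.trace • (1 : Matrix (Fin d) (Fin d) ℂ) - Bᵀ)
        = (p : ℂ) • outer ψ) :
    A = 0 ∧ 0 ≤ p ∧ (2 < d → B = 0 ∧ p = 0) := by
  classical
  set P : Matrix (Fin d) (Fin d) ℂ := outer ψ with hPdef
  have hPH : Pᴴ = P := by
    ext i j
    simp [hPdef, outer, conjTranspose_apply, vecMulVec_apply, mul_comm]
  have hP2 : P * P = P := by
    ext i j
    simp only [hPdef, outer, mul_apply, vecMulVec_apply, Pi.star_apply]
    calc ∑ k, ψ i * star (ψ k) * (ψ k * star (ψ j))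
        = (ψ i * star (ψ j)) * ∑ k, star (ψ k) * ψ k := by
          rw [Finset.mul_sum]; exact Finset.sum_congr rfl fun k _ => by ring
      _ = ψ i * star (ψ j) := by
          have h1 : ∑ k, star (ψ k) * ψ k = star ψ ⬝ᵥ ψ := rfl
          rw [h1, hψ, mul_one]
  have hPsd : P.PosSemidef := by
    refine Matrix.PosSemidef.of_dotProduct_mulVec_nonneg hPH fun x => ?_
    have key : star x ⬝ᵥ P *ᵥ x = star (star ψ ⬝ᵥ x) * (star ψ ⬝ᵥ x) := by
      simp only [hPdef, outer, dotProduct, mulVec, vecMulVec_apply, Pi.star_apply,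
        star_sum, star_mul', star_star, Finset.sum_mul, Finset.mul_sum]
      rw [Finset.sum_comm]
      refine Finset.sum_congr rfl fun i _ => Finset.sum_congr rfl fun j _ => by ring
    rw [key]
    exact star_mul_self_nonneg _
  have htrP : P.trace = 1 := by
    simpa [Matrix.trace, Matrix.diag, hPdef, outer, vecMulVec_apply, dotProduct,
      mul_comm] using hψ
  set Q : Matrix (Fin d) (Fin d) ℂ := 1 - P with hQdef
  have hQH : Qᴴ = Q := by simp [hQdef, conjTranspose_sub, hPH]
  have hQ2 : Q * Q = Q := by
    simp only [hQdef, sub_mul, mul_sub, mul_one, one_mul, hP2]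
    abel
  have hQsd : Q.PosSemidef := by
    have := posSemidef_conjTranspose_mul_self Q
    rwa [hQH, hQ2] at this
  have htrQ : Q.trace = (d : ℂ) - 1 := by
    simp [hQdef, trace_sub, trace_one, htrP]
  have hPQ : P * Q = 0 := by
    simp [hQdef, mul_sub, hP2]
  have hAT : Aᵀ.PosSemidef := hA.transpose
  have hBT : Bᵀ.PosSemidef := hB.transpose
  have ha : (0:ℂ) ≤ A.trace := psd_trace_nonneg hA
  have hb : (0:ℂ) ≤ B.trace := psd_trace_nonneg hB
  have haq : (0:ℂ) ≤ (Aᵀ * Q).trace := psd_trace_mul_nonneg hAT hQsd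
  have hbp : (0:ℂ) ≤ (Bᵀ * P).trace := psd_trace_mul_nonneg hBT hPsd
  have hd1 : (0:ℂ) ≤ (d : ℂ) - 1 := by
    rw [show ((d:ℂ) - 1) = ((d - 1 : ℕ) : ℂ) by
      push_cast [Nat.cast_sub (by omega : 1 ≤ d)]; ring]
    exact_mod_cast Nat.cast_nonneg _
  have hd2 : (0:ℂ) ≤ (d : ℂ) - 2 := by
    rw [show ((d:ℂ) - 2) = ((d - 2 : ℕ) : ℂ) by
      push_cast [Nat.cast_sub hd]; ring]
    exact_mod_cast Nat.cast_nonneg _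
  -- Multiply the hypothesis by `Q` on the right and take traces.
  have hQeq := congrArg (fun M => (M * Q).trace) h
  simp only [add_mul, sub_mul, smul_mul_assoc, one_mul, hPQ, trace_add, trace_sub,
    trace_smul, smul_eq_mul, smul_zero, trace_zero, mul_zero] at hQeq
  have hBQ : (Bᵀ * Q).trace = B.trace - (Bᵀ * P).trace := by
    simp [hQdef, mul_sub, trace_sub, trace_transpose]
  rw [hBQ, htrQ] at hQeq
  have hE : (A.trace * ((d:ℂ) - 1) + (Aᵀ * Q).trace)
      + (B.trace * ((d:ℂ) - 2) + (Bᵀ * P).trace) = 0 := by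
    linear_combination 2 * hQeq
  have t1n : (0:ℂ) ≤ A.trace * ((d:ℂ) - 1) := mul_nonneg ha hd1
  have t34n : (0:ℂ) ≤ B.trace * ((d:ℂ) - 2) + (Bᵀ * P).trace :=
    add_nonneg (mul_nonneg hb hd2) hbp
  have t12n : (0:ℂ) ≤ A.trace * ((d:ℂ) - 1) + (Aᵀ * Q).trace := add_nonneg t1n haq
  have ht12 : A.trace * ((d:ℂ) - 1) + (Aᵀ * Q).trace = 0 := by
    refine le_antisymm ?_ t12n
    calc A.trace * ((d:ℂ) - 1) + (Aᵀ * Q).trace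
        = -(B.trace * ((d:ℂ) - 2) + (Bᵀ * P).trace) := by linear_combination hE
      _ ≤ 0 := neg_nonpos.mpr t34n
  have ht34 : B.trace * ((d:ℂ) - 2) + (Bᵀ * P).trace = 0 := by
    refine le_antisymm ?_ t34n
    calc B.trace * ((d:ℂ) - 2) + (Bᵀ * P).trace
        = -(A.trace * ((d:ℂ) - 1) + (Aᵀ * Q).trace) := by linear_combination hE
      _ ≤ 0 := neg_nonpos.mpr t12n
  have ht1 : A.trace * ((d:ℂ) - 1) = 0 := by
    refine le_antisymm ?_ t1n
    calc A.trace * ((d:ℂ) - 1) = -(Aᵀ * Q).trace := by linear_combination ht12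
      _ ≤ 0 := neg_nonpos.mpr haq
  have hAtr : A.trace = 0 := by
    rcases mul_eq_zero.mp ht1 with h' | h'
    · exact h'
    · exfalso
      have : (d:ℂ) = 1 := by linear_combination h'
      have : d = 1 := by exact_mod_cast this
      omega
  have hA0 : A = 0 := psd_trace_eq_zero hA hAtr
  -- trace of the whole equation
  have hTr := congrArg Matrix.trace h
  simp only [trace_add, trace_sub, trace_smul, trace_one, trace_transpose, smul_eq_mul,
    htrP, Fintype.card_fin, mul_one] at hTr
  have hp : (p:ℂ) = 2⁻¹ * (B.trace * ((d:ℂ) - 1)) := by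
    rw [hAtr] at hTr
    linear_combination -hTr
  have hpnn : (0:ℂ) ≤ (p:ℂ) := by
    rw [hp]
    refine mul_nonneg ?_ (mul_nonneg hb hd1)
    rw [show ((2:ℂ))⁻¹ = (((2:ℝ)⁻¹:ℝ):ℂ) by norm_num]
    exact Complex.zero_le_real.mpr (by norm_num)
  have hp0 : 0 ≤ p := Complex.zero_le_real.mp hpnn
  refine ⟨hA0, hp0, fun hd3 => ?_⟩
  have ht3 : B.trace * ((d:ℂ) - 2) = 0 := by
    refine le_antisymm ?_ (mul_nonneg hb hd2)
    calc B.trace * ((d:ℂ) - 2) = -(Bᵀ * P).trace := by linear_combination ht34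
      _ ≤ 0 := neg_nonpos.mpr hbp
  have hBtr : B.trace = 0 := by
    rcases mul_eq_zero.mp ht3 with h' | h'
    · exact h'
    · exfalso
      have : (d:ℂ) = 2 := by linear_combination h'
      have : d = 2 := by exact_mod_cast this
      omega
  have hB0 : B = 0 := psd_trace_eq_zero hB hBtr
  have : (p:ℂ) = 0 := by rw [hp, hBtr]; ring
  exact ⟨hB0, by exact_mod_cast this⟩
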